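/- Let M : (Ω,𝒜,P) → ℝⁿ be a Markov kernel with finite mean, and M₁ : (Ω,𝒜,P) → (Ω₁,𝒜₁), M₂ : (Ω,𝒜,P) → (Ω₂,𝒜₂) Markov kernels. If M₂ is independent of the diagonal product M × M₁ (i.e., P^{M×M₁×M₂} = P^{M×M₁} × P^{M₂}), then the conditional expectation of M given M₁ × M₂ equals the conditional expectation of M given M₁, viewed as a function of the first coordinate: E_P(M | M₁ × M₂)(ω₁, ω₂) = E_P(M | M₁)(ω₁) for P^{M₁×M₂}-almost every (ω₁, ω₂). -/

import Mathlib

open MeasureTheory ProbabilityTheory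
open ENNReal

lemma euclid_abs_le_norm {n : ℕ} (v : EuclideanSpace ℝ (Fin n)) (i : Fin n) : |v i| ≤ ‖v‖ := by
  rw [EuclideanSpace.norm_eq]
  have : |v i| = Real.sqrt (‖v i‖ ^ 2) := by
    rw [Real.sqrt_sq_eq_abs]; simp [abs_abs]
  rw [this]
  apply Real.sqrt_le_sqrt
  exact Finset.single_le_sum (f := fun j => ‖v j‖ ^ 2) (fun j _ => sq_nonneg _) (Finset.mem_univ i)

lemma euclid_norm_le_sum {n : ℕ} (v : EuclideanSpace ℝ (Fin n)) : ‖v‖ ≤ ∑ i, |v i| := by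
  rw [EuclideanSpace.norm_eq]
  have h1 : ∑ i, ‖v i‖ ^ 2 ≤ (∑ i, ‖v i‖) ^ 2 :=
    Finset.sum_sq_le_sq_sum_of_nonneg (fun i _ => norm_nonneg _)
  calc Real.sqrt (∑ i, ‖v i‖ ^ 2) ≤ Real.sqrt ((∑ i, ‖v i‖) ^ 2) := Real.sqrt_le_sqrt h1
    _ = |∑ i, ‖v i‖| := Real.sqrt_sq_eq_abs _
    _ = ∑ i, |v i| := by
        rw [abs_of_nonneg (Finset.sum_nonneg fun i _ => norm_nonneg _)]
        simp [Real.norm_eq_abs]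

lemma aux_lintegral_ofReal_le {α : Type*} {mα : MeasurableSpace α}
    (μ : Measure α) [IsFiniteMeasure μ] {n : ℕ}
    {g : α → EuclideanSpace ℝ (Fin n)} (hgm : Measurable g) {C : ℝ}
    (h : ∀ A : Set α, MeasurableSet A → ‖∫ x in A, g x ∂μ‖ ≤ C)
    (i : Fin n) (τ : ℝ) (hτ : |τ| ≤ 1) :
    ∫⁻ x, ENNReal.ofReal (τ * g x i) ∂μ ≤ ENNReal.ofReal C := by
  have hgi : Measurable fun x => g x i := (measurable_pi_apply i).comp ((WithLp.measurable_ofLp _ _).comp hgm)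
  set A : ℕ → Set α := fun N => {x | ‖g x‖ ≤ N} ∩ {x | 0 ≤ τ * g x i} with hA
  have hAm : ∀ N, MeasurableSet (A N) :=
    fun N => (measurableSet_le hgm.norm measurable_const).inter
      (measurableSet_le measurable_const (hgi.const_mul τ))
  have hmono : Monotone fun N => (A N).indicator fun x => ENNReal.ofReal (τ * g x i) := by
    intro N N' hNN' x
    by_cases hx : x ∈ A N
    · have h1 : ‖g x‖ ≤ (N' : ℝ) := le_trans hx.1 (by exact_mod_cast hNN')
      have hx' : x ∈ A N' := ⟨h1, hx.2⟩
      simp [Set.indicator_of_mem hx, Set.indicator_of_mem hx']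
    · simp [Set.indicator_of_notMem hx]
  have hsup : ∀ x, ⨆ N, (A N).indicator (fun x => ENNReal.ofReal (τ * g x i)) x
      = ENNReal.ofReal (τ * g x i) := by
    intro x
    by_cases hnn : 0 ≤ τ * g x i
    · obtain ⟨N, hN⟩ := exists_nat_ge ‖g x‖
      apply le_antisymm
      · exact iSup_le fun N => Set.indicator_le_self _ _ x
      · refine le_trans ?_ (le_iSup _ N)
        have hxA : x ∈ A N := ⟨hN, hnn⟩
        rw [Set.indicator_of_mem hxA]
    · have : ENNReal.ofReal (τ * g x i) = 0 := ENNReal.ofReal_of_nonpos (le_of_not_ge hnn)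
      simp only [this, nonpos_iff_eq_zero, ENNReal.iSup_eq_zero]
      intro N
      by_cases hx : x ∈ A N
      · exact absurd hx.2 hnn
      · simp [Set.indicator_of_notMem hx]
  have key : ∀ N : ℕ, ∫⁻ x, (A N).indicator (fun x => ENNReal.ofReal (τ * g x i)) x ∂μ
      ≤ ENNReal.ofReal C := by
    intro N
    rw [lintegral_indicator (hAm N)]
    have hint : IntegrableOn g (A N) μ := by
      refine Integrable.mono' (integrable_const (N : ℝ)) hgm.aestronglyMeasurable.restrict ?_
      exact (ae_restrict_iff' (hAm N)).mpr (Filter.Eventually.of_forall fun x hx => hx.1)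
    have hinti : IntegrableOn (fun x => τ * g x i) (A N) μ := by
      refine Integrable.mono' (hint.norm.const_mul |τ|) ((hgi.const_mul τ).aestronglyMeasurable.restrict) ?_
      refine Filter.Eventually.of_forall fun x => ?_
      rw [Real.norm_eq_abs, abs_mul]
      exact mul_le_mul_of_nonneg_left (euclid_abs_le_norm _ i) (abs_nonneg τ)
    rw [← ofReal_integral_eq_lintegral_ofReal hinti
      ((ae_restrict_iff' (hAm N)).mpr (Filter.Eventually.of_forall fun x hx => hx.2))]
    apply ENNReal.ofReal_le_ofReal
    have hcomm := ContinuousLinearMap.integral_comp_comm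
      (EuclideanSpace.proj (𝕜 := ℝ) i) hint
    have hproj : ∫ x in A N, τ * g x i ∂μ
        = τ * ((EuclideanSpace.proj (𝕜 := ℝ) i) (∫ x in A N, g x ∂μ)) := by
      rw [integral_const_mul, ← hcomm]
      rfl
    rw [hproj]
    calc τ * (EuclideanSpace.proj i) (∫ x in A N, g x ∂μ)
        ≤ |τ * (EuclideanSpace.proj i) (∫ x in A N, g x ∂μ)| := le_abs_self _
      _ = |τ| * |(∫ x in A N, g x ∂μ) i| := by rw [abs_mul]; rfl
      _ ≤ |τ| * ‖∫ x in A N, g x ∂μ‖ := by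
          exact mul_le_mul_of_nonneg_left (euclid_abs_le_norm _ i) (abs_nonneg τ)
      _ ≤ |τ| * C := mul_le_mul_of_nonneg_left (h _ (hAm N)) (abs_nonneg τ)
      _ ≤ C := by
          have hC : 0 ≤ C := (norm_nonneg _).trans (h ∅ MeasurableSet.empty)
          nlinarith [abs_nonneg τ]
  calc ∫⁻ x, ENNReal.ofReal (τ * g x i) ∂μ
      = ∫⁻ x, ⨆ N, (A N).indicator (fun x => ENNReal.ofReal (τ * g x i)) x ∂μ := by
        simp_rw [hsup]
    _ = ⨆ N, ∫⁻ x, (A N).indicator (fun x => ENNReal.ofReal (τ * g x i)) x ∂μ := by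
        refine lintegral_iSup (fun N => ((hgi.const_mul τ).ennreal_ofReal).indicator (hAm N)) ?_
        exact fun N N' h => fun x => hmono h x
    _ ≤ ENNReal.ofReal C := iSup_le key

lemma aux_integrable_of_setIntegral_norm_le {α : Type*} {mα : MeasurableSpace α}
    (μ : Measure α) [IsFiniteMeasure μ] {n : ℕ}
    {g : α → EuclideanSpace ℝ (Fin n)} (hgm : Measurable g) {C : ℝ}
    (h : ∀ A : Set α, MeasurableSet A → ‖∫ x in A, g x ∂μ‖ ≤ C) :
    Integrable g μ := by
  have hgi : ∀ i : Fin n, Integrable (fun x => g x i) μ := by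
    intro i
    refine ⟨((measurable_pi_apply i).comp ((WithLp.measurable_ofLp _ _).comp hgm)).aestronglyMeasurable, ?_⟩
    have heq : ∀ x : α, (‖g x i‖₊ : ℝ≥0∞)
        = ENNReal.ofReal (1 * g x i) + ENNReal.ofReal ((-1) * g x i) := by
      intro x
      rw [one_mul, neg_one_mul, ← enorm_eq_nnnorm, Real.enorm_eq_ofReal_abs]
      rcases le_total 0 (g x i) with hx | hx
      · rw [abs_of_nonneg hx, ENNReal.ofReal_of_nonpos (neg_nonpos.mpr hx), add_zero]
      · rw [abs_of_nonpos hx, ENNReal.ofReal_of_nonpos hx, zero_add]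
    show (∫⁻ x, (‖g x i‖₊ : ℝ≥0∞) ∂μ) < ⊤
    have hm1 : Measurable fun x => ENNReal.ofReal (1 * g x i) :=
      (((measurable_pi_apply i).comp ((WithLp.measurable_ofLp _ _).comp hgm)).const_mul 1).ennreal_ofReal
    calc ∫⁻ x, (‖g x i‖₊ : ℝ≥0∞) ∂μ
        = ∫⁻ x, (ENNReal.ofReal (1 * g x i) + ENNReal.ofReal ((-1) * g x i)) ∂μ := by
          simp_rw [heq]
      _ = (∫⁻ x, ENNReal.ofReal (1 * g x i) ∂μ) + ∫⁻ x, ENNReal.ofReal ((-1) * g x i) ∂μ :=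
          lintegral_add_left hm1 _
      _ ≤ ENNReal.ofReal C + ENNReal.ofReal C := by
          exact add_le_add (aux_lintegral_ofReal_le μ hgm h i 1 (by norm_num))
            (aux_lintegral_ofReal_le μ hgm h i (-1) (by norm_num))
      _ < ⊤ := by simp
  refine Integrable.mono' (f := g) (integrable_finset_sum Finset.univ (fun i _ => (hgi i).abs))
    hgm.aestronglyMeasurable ?_
  exact Filter.Eventually.of_forall fun x => euclid_norm_le_sum (g x)

lemma aux_bind_prob {Ω Ω' : Type*} {𝒜 : MeasurableSpace Ω} {𝒜' : MeasurableSpace Ω'}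
    (P : Measure Ω) [IsProbabilityMeasure P] (κ : Kernel Ω Ω') [IsMarkovKernel κ] :
    IsProbabilityMeasure (P.bind (fun ω => κ ω)) := by
  constructor
  rw [Measure.bind_apply MeasurableSet.univ κ.measurable.aemeasurable]
  simp

lemma aux_indep_lintegral {Ω Ω' Ω₂ : Type*} {𝒜 : MeasurableSpace Ω} {𝒜' : MeasurableSpace Ω'}
    {𝒜₂ : MeasurableSpace Ω₂}
    (P : Measure Ω) [IsProbabilityMeasure P]
    (κ : Kernel Ω Ω') [IsMarkovKernel κ] (M₂ : Kernel Ω Ω₂) [IsMarkovKernel M₂]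
    (hind : P.bind (fun ω => (κ ×ₖ M₂) ω) = (P.bind (fun ω => κ ω)).prod (P.bind (fun ω => M₂ ω)))
    {A₂ : Set Ω₂} (hA₂ : MeasurableSet A₂) {f : Ω' → ℝ≥0∞} (hf : Measurable f) :
    ∫⁻ ω, (∫⁻ y, f y ∂(κ ω)) * M₂ ω A₂ ∂P
      = (∫⁻ ω, ∫⁻ y, f y ∂(κ ω) ∂P) * P.bind (fun ω => M₂ ω) A₂ := by
  have hκm : Measurable fun ω => κ ω := κ.measurable
  haveI := aux_bind_prob P κ
  haveI := aux_bind_prob P M₂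
  have hM₂m : Measurable fun ω => M₂ ω A₂ := Kernel.measurable_coe M₂ hA₂
  -- the "rectangle" identity from hind
  have hrect : ∀ C : Set Ω', MeasurableSet C →
      ∫⁻ ω, κ ω C * M₂ ω A₂ ∂P = P.bind (fun ω => κ ω) C * P.bind (fun ω => M₂ ω) A₂ := by
    intro C hC
    have h1 : P.bind (fun ω => (κ ×ₖ M₂) ω) (C ×ˢ A₂) = ∫⁻ ω, κ ω C * M₂ ω A₂ ∂P := by
      rw [Measure.bind_apply (hC.prod hA₂) (κ ×ₖ M₂).measurable.aemeasurable]
      congr 1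
      funext ω
      rw [Kernel.prod_apply, Measure.prod_prod]
    have h2 : (P.bind (fun ω => κ ω)).prod (P.bind (fun ω => M₂ ω)) (C ×ˢ A₂)
        = P.bind (fun ω => κ ω) C * P.bind (fun ω => M₂ ω) A₂ := Measure.prod_prod C A₂
    rw [← h1, hind, h2]
  -- the measure equality
  have hmeas_eq : (P.withDensity (fun ω => M₂ ω A₂)).bind (fun ω => κ ω)
      = (P.bind (fun ω => M₂ ω) A₂) • P.bind (fun ω => κ ω) := by
    ext C hC
    rw [Measure.bind_apply hC hκm.aemeasurable,
      lintegral_withDensity_eq_lintegral_mul P hM₂m (Kernel.measurable_coe κ hC),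
      Measure.smul_apply, smul_eq_mul]
    have heq : ∫⁻ a, ((fun ω => M₂ ω A₂) * fun a => κ a C) a ∂P
        = ∫⁻ ω, κ ω C * M₂ ω A₂ ∂P := by
      congr 1
      funext ω
      rw [Pi.mul_apply, mul_comm]
    rw [heq, hrect C hC, Measure.bind_apply hC hκm.aemeasurable, mul_comm]
  calc ∫⁻ ω, (∫⁻ y, f y ∂(κ ω)) * M₂ ω A₂ ∂P
      = ∫⁻ ω, (∫⁻ y, f y ∂(κ ω)) ∂(P.withDensity (fun ω => M₂ ω A₂)) := by
        rw [lintegral_withDensity_eq_lintegral_mul P hM₂m (hf.lintegral_kernel (κ := κ))]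
        congr 1
        funext ω
        rw [Pi.mul_apply, mul_comm]
    _ = ∫⁻ y, f y ∂((P.withDensity (fun ω => M₂ ω A₂)).bind (fun ω => κ ω)) :=
        (Measure.lintegral_bind hκm.aemeasurable hf.aemeasurable).symm
    _ = ∫⁻ y, f y ∂((P.bind (fun ω => M₂ ω) A₂) • P.bind (fun ω => κ ω)) := by rw [hmeas_eq]
    _ = (P.bind (fun ω => M₂ ω) A₂) * ∫⁻ y, f y ∂(P.bind (fun ω => κ ω)) :=
        lintegral_smul_measure _ _
    _ = (∫⁻ ω, ∫⁻ y, f y ∂(κ ω) ∂P) * P.bind (fun ω => M₂ ω) A₂ := by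
        rw [Measure.lintegral_bind hκm.aemeasurable hf.aemeasurable, mul_comm]

/-- Main theorem: if `M₂ ⊥⊥ M × M₁` then `E_P(M | M₁ × M₂) = E_P(M | M₁)` (the latter viewed
as a function of the first coordinate), `P^{M₁ × M₂}`-almost everywhere. -/
theorem stmt_9 {Ω Ω₁ Ω₂ : Type*} {𝒜 : MeasurableSpace Ω}
    {𝒜₁ : MeasurableSpace Ω₁} {𝒜₂ : MeasurableSpace Ω₂} {n : ℕ}
    (P : Measure Ω) [IsProbabilityMeasure P]
    (M : Kernel Ω (EuclideanSpace ℝ (Fin n))) [IsMarkovKernel M]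
    (M₁ : Kernel Ω Ω₁) [IsMarkovKernel M₁]
    (M₂ : Kernel Ω Ω₂) [IsMarkovKernel M₂]
    (hmean : ∫⁻ ω, ∫⁻ x, ‖x‖₊ ∂(M ω) ∂P < ⊤)
    -- independence of M₂ and M × M₁ : P^{M×M₁×M₂} = P^{M×M₁} × P^{M₂}
    (hind : P.bind (fun ω => ((M ×ₖ M₁) ×ₖ M₂) ω) =
      (P.bind (fun ω => (M ×ₖ M₁) ω)).prod (P.bind (fun ω => M₂ ω)))
    -- g₁ is (a version of) E_P(M | M₁)
    (g₁ : Ω₁ → EuclideanSpace ℝ (Fin n)) (hg₁m : Measurable g₁)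
    (hg₁ : ∀ A₁ : Set Ω₁, MeasurableSet A₁ →
      ∫ ω, (M₁ ω A₁).toReal • (∫ x, x ∂(M ω)) ∂P =
        ∫ ω₁ in A₁, g₁ ω₁ ∂(P.bind (fun ω => M₁ ω)))
    -- g₁₂ is (a version of) E_P(M | M₁ × M₂)
    (g₁₂ : Ω₁ × Ω₂ → EuclideanSpace ℝ (Fin n)) (hg₁₂m : Measurable g₁₂)
    (hg₁₂ : ∀ B : Set (Ω₁ × Ω₂), MeasurableSet B →
      ∫ ω, ((M₁ ×ₖ M₂) ω B).toReal • (∫ x, x ∂(M ω)) ∂P =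
        ∫ p in B, g₁₂ p ∂(P.bind (fun ω => (M₁ ×ₖ M₂) ω))) :
    g₁₂ =ᵐ[P.bind (fun ω => (M₁ ×ₖ M₂) ω)] fun p => g₁ p.1 := by
  classical
  set Q₂ := P.bind (fun ω => M₂ ω) with hQ₂def
  set Q₁ := P.bind (fun ω => M₁ ω) with hQ₁def
  set Q := P.bind (fun ω => (M₁ ×ₖ M₂) ω) with hQdef
  haveI : IsProbabilityMeasure Q₁ := aux_bind_prob P M₁
  haveI : IsProbabilityMeasure Q₂ := aux_bind_prob P M₂
  haveI : IsProbabilityMeasure Q := aux_bind_prob P (M₁ ×ₖ M₂)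
  set m : Ω → EuclideanSpace ℝ (Fin n) := fun ω => ∫ x, x ∂(M ω) with hmdef
  have hmsm : StronglyMeasurable m := by
    exact StronglyMeasurable.integral_kernel_prod_right (κ := M)
      (f := fun _ x => x) (measurable_snd.stronglyMeasurable)
  set hh : Ω → ℝ≥0∞ := fun ω => ∫⁻ x, ‖x‖₊ ∂(M ω) with hhdef
  have hhm : Measurable hh := Measurable.lintegral_kernel (measurable_id.nnnorm.coe_nnreal_ennreal) (κ := M)
  have hhfin : ∫⁻ ω, hh ω ∂P ≠ ⊤ := hmean.ne
  have hhae : ∀ᵐ ω ∂P, hh ω < ⊤ := ae_lt_top hhm hhfin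
  have hnorm_m : ∀ ω, (‖m ω‖₊ : ℝ≥0∞) ≤ hh ω := fun ω =>
    enorm_integral_le_lintegral_enorm _
  set C₀ : ℝ := (∫⁻ ω, hh ω ∂P).toReal with hC₀def
  -- generic bound on the defining integrals
  have FB : ∀ (r : Ω → ℝ≥0∞), (∀ ω, r ω ≤ 1) →
      ‖∫ ω, (r ω).toReal • m ω ∂P‖ ≤ C₀ := by
    intro r hr
    refine le_trans (norm_integral_le_lintegral_norm _) ?_
    apply ENNReal.toReal_mono hhfin
    apply lintegral_mono
    intro ω
    show ENNReal.ofReal ‖(r ω).toReal • m ω‖ ≤ hh ω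
    rw [norm_smul, Real.norm_eq_abs, ENNReal.abs_toReal]
    refine le_trans (ENNReal.ofReal_le_ofReal (mul_le_of_le_one_left (norm_nonneg _) ?_)) ?_
    · simpa using ENNReal.toReal_mono one_ne_top (hr ω)
    · rw [ofReal_norm_eq_enorm]
      exact hnorm_m ω
  have hvecint : ∀ (r : Ω → ℝ≥0∞), Measurable r → (∀ ω, r ω ≤ 1) →
      Integrable (fun ω => (r ω).toReal • m ω) P := by
    intro r hrm hr
    refine Integrable.mono' (g := fun ω => (hh ω).toReal)
      (integrable_toReal_of_lintegral_ne_top hhm.aemeasurable hhfin)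
      ((hrm.ennreal_toReal.aestronglyMeasurable).smul hmsm.aestronglyMeasurable) ?_
    filter_upwards [hhae] with ω hω
    rw [norm_smul, Real.norm_eq_abs, ENNReal.abs_toReal]
    calc (r ω).toReal * ‖m ω‖ ≤ 1 * ‖m ω‖ := by
          refine mul_le_mul_of_nonneg_right ?_ (norm_nonneg _)
          simpa using ENNReal.toReal_mono one_ne_top (hr ω)
      _ = ‖m ω‖ := one_mul _
      _ = ((‖m ω‖₊ : ℝ≥0∞)).toReal := by simp
      _ ≤ (hh ω).toReal := ENNReal.toReal_mono hω.ne (hnorm_m ω)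
  -- integrability of g₁ and g₁₂
  have hg₁int : Integrable g₁ Q₁ := by
    refine aux_integrable_of_setIntegral_norm_le Q₁ hg₁m (C := C₀) ?_
    intro A₁ hA₁
    rw [← hg₁ A₁ hA₁]
    exact FB _ (fun ω => prob_le_one)
  have hg₁₂int : Integrable g₁₂ Q := by
    refine aux_integrable_of_setIntegral_norm_le Q hg₁₂m (C := C₀) ?_
    intro B hB
    rw [← hg₁₂ B hB]
    exact FB _ (fun ω => prob_le_one)
  -- key independence consequence
  have key : ∀ (F : EuclideanSpace ℝ (Fin n) → ℝ≥0∞), Measurable F →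
      ∀ {A₁ : Set Ω₁}, MeasurableSet A₁ → ∀ {A₂ : Set Ω₂}, MeasurableSet A₂ →
      ∫⁻ ω, (∫⁻ x, F x ∂(M ω)) * M₁ ω A₁ * M₂ ω A₂ ∂P
        = (∫⁻ ω, (∫⁻ x, F x ∂(M ω)) * M₁ ω A₁ ∂P) * Q₂ A₂ := by
    intro F hF A₁ hA₁ A₂ hA₂
    have hfm : Measurable (fun p : EuclideanSpace ℝ (Fin n) × Ω₁ =>
        F p.1 * A₁.indicator (1 : Ω₁ → ℝ≥0∞) p.2) :=
      (hF.comp measurable_fst).mul ((measurable_one.indicator hA₁).comp measurable_snd)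
    have hstep := aux_indep_lintegral P (M ×ₖ M₁) M₂ hind hA₂ hfm
    have hinner : ∀ ω, (∫⁻ p, F p.1 * A₁.indicator (1 : Ω₁ → ℝ≥0∞) p.2 ∂((M ×ₖ M₁) ω))
        = (∫⁻ x, F x ∂(M ω)) * M₁ ω A₁ := by
      intro ω
      rw [Kernel.prod_apply,
        lintegral_prod_mul hF.aemeasurable (measurable_one.indicator hA₁).aemeasurable,
        lintegral_indicator_one hA₁]
    simp_rw [hinner] at hstep
    exact hstep
  -- Q is the product measure
  have hQ_apply : ∀ {B : Set (Ω₁ × Ω₂)}, MeasurableSet B →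
      Q B = ∫⁻ ω, (M₁ ×ₖ M₂) ω B ∂P := fun hB =>
    Measure.bind_apply hB (M₁ ×ₖ M₂).measurable.aemeasurable
  have hQ₁_apply : ∀ {A₁ : Set Ω₁}, MeasurableSet A₁ →
      Q₁ A₁ = ∫⁻ ω, M₁ ω A₁ ∂P := fun hA₁ => Measure.bind_apply hA₁ M₁.measurable.aemeasurable
  have hQ₂_apply : ∀ {A₂ : Set Ω₂}, MeasurableSet A₂ →
      Q₂ A₂ = ∫⁻ ω, M₂ ω A₂ ∂P := fun hA₂ => Measure.bind_apply hA₂ M₂.measurable.aemeasurable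
  have hQrect : ∀ {A₁ : Set Ω₁}, MeasurableSet A₁ → ∀ {A₂ : Set Ω₂}, MeasurableSet A₂ →
      Q (A₁ ×ˢ A₂) = Q₁ A₁ * Q₂ A₂ := by
    intro A₁ hA₁ A₂ hA₂
    rw [hQ_apply (hA₁.prod hA₂)]
    have h1 : ∀ ω, (M₁ ×ₖ M₂) ω (A₁ ×ˢ A₂) = M₁ ω A₁ * M₂ ω A₂ := by
      intro ω; rw [Kernel.prod_apply, Measure.prod_prod]
    simp_rw [h1]
    have h2 := key (fun _ => 1) measurable_const hA₁ hA₂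
    simp only [lintegral_one, measure_univ, one_mul] at h2
    rw [h2, hQ₁_apply hA₁]
  have hQprod : Q = Q₁.prod Q₂ :=
    (Measure.prod_eq (fun s t hs ht => by rw [hQrect hs ht])).symm
  -- the positive/negative part kernels densities
  set c : ℝ → Fin n → Ω → ℝ≥0∞ :=
    fun τ i ω => ∫⁻ x, ENNReal.ofReal (τ * x i) ∂(M ω) with hcdef
  have hcm : ∀ τ i, Measurable (c τ i) := by
    intro τ i
    exact Measurable.lintegral_kernel (κ := M)
      ((((measurable_pi_apply i).comp (WithLp.measurable_ofLp 2 (Fin n → ℝ))).const_mul τ).ennreal_ofReal)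
  have hcle : ∀ τ, |τ| ≤ 1 → ∀ i ω, c τ i ω ≤ hh ω := by
    intro τ hτ i ω
    refine lintegral_mono fun x => ?_
    rw [← enorm_eq_nnnorm, ← ofReal_norm_eq_enorm]
    refine ENNReal.ofReal_le_ofReal ?_
    calc τ * x i ≤ |τ * x i| := le_abs_self _
      _ = |τ| * |x i| := abs_mul _ _
      _ ≤ 1 * |x i| := mul_le_mul_of_nonneg_right hτ (abs_nonneg _)
      _ = |x i| := one_mul _
      _ ≤ ‖x‖ := euclid_abs_le_norm x i
  have hcint : ∀ τ, |τ| ≤ 1 → ∀ i, ∫⁻ ω, c τ i ω ∂P ≠ ⊤ := by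
    intro τ hτ i
    exact ((lintegral_mono (hcle τ hτ i)).trans_lt hmean).ne
  -- the a.e. splitting of the mean into positive and negative parts
  have hm_split : ∀ᵐ ω ∂P, ∀ i : Fin n,
      m ω i = (c 1 i ω).toReal - (c (-1) i ω).toReal := by
    filter_upwards [hhae] with ω hω
    intro i
    have hint : Integrable (fun x : EuclideanSpace ℝ (Fin n) => x) (M ω) :=
      ⟨aestronglyMeasurable_id, hω⟩
    have hproji : Integrable (fun x : EuclideanSpace ℝ (Fin n) => x i) (M ω) :=
      (EuclideanSpace.proj (𝕜 := ℝ) i).integrable_comp hint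
    have h1 : m ω i = ∫ x, x i ∂(M ω) := by
      rw [hmdef]
      exact (ContinuousLinearMap.integral_comp_comm (EuclideanSpace.proj (𝕜 := ℝ) i) hint).symm
    rw [h1, integral_eq_lintegral_pos_part_sub_lintegral_neg_part hproji]
    rw [hcdef]
    simp only [one_mul, neg_one_mul]
  -- helper: lintegral over Q of a function of the first coordinate
  have hlint_fst : ∀ (F : Ω₁ → ℝ≥0∞), Measurable F →
      ∀ {A₁ : Set Ω₁}, MeasurableSet A₁ → ∀ {A₂ : Set Ω₂}, MeasurableSet A₂ →
      ∫⁻ p in A₁ ×ˢ A₂, F p.1 ∂Q = (∫⁻ ω₁ in A₁, F ω₁ ∂Q₁) * Q₂ A₂ := by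
    intro F hF A₁ hA₁ A₂ hA₂
    rw [hQprod, ← Measure.prod_restrict, ← lintegral_map hF measurable_fst,
      Measure.map_fst_prod, Measure.restrict_apply_univ, lintegral_smul_measure, mul_comm, smul_eq_mul]
  -- the four measures
  set μm : ℝ → Fin n → Measure (Ω₁ × Ω₂) :=
    fun τ i => (P.withDensity (c τ i)).bind (fun ω => (M₁ ×ₖ M₂) ω) with hμmdef
  set νm : ℝ → Fin n → Measure (Ω₁ × Ω₂) :=
    fun τ i => Q.withDensity (fun p => ENNReal.ofReal (τ * g₁ p.1 i)) with hνmdef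
  have hμm_apply : ∀ τ i {B : Set (Ω₁ × Ω₂)}, MeasurableSet B →
      μm τ i B = ∫⁻ ω, c τ i ω * (M₁ ×ₖ M₂) ω B ∂P := by
    intro τ i B hB
    rw [hμmdef]
    rw [Measure.bind_apply hB (M₁ ×ₖ M₂).measurable.aemeasurable,
      lintegral_withDensity_eq_lintegral_mul P (hcm τ i) (Kernel.measurable_coe _ hB)]
    rfl
  have hνm_apply : ∀ τ i {B : Set (Ω₁ × Ω₂)}, MeasurableSet B →
      νm τ i B = ∫⁻ p in B, ENNReal.ofReal (τ * g₁ p.1 i) ∂Q := by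
    intro τ i B hB
    rw [hνmdef, withDensity_apply _ hB]
  have hμm_fin : ∀ (τ : ℝ), |τ| ≤ 1 → ∀ i {B : Set (Ω₁ × Ω₂)}, MeasurableSet B →
      μm τ i B ≠ ⊤ := by
    intro τ hτ i B hB
    rw [hμm_apply τ i hB]
    refine ne_top_of_le_ne_top hhfin (lintegral_mono fun ω => ?_)
    calc c τ i ω * (M₁ ×ₖ M₂) ω B ≤ c τ i ω * 1 := mul_le_mul_right prob_le_one _
      _ = c τ i ω := mul_one _
      _ ≤ hh ω := hcle τ hτ i ω
  have hgi_meas : ∀ i : Fin n, Measurable fun ω₁ => g₁ ω₁ i :=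
    fun i => (measurable_pi_apply i).comp ((WithLp.measurable_ofLp _ _).comp hg₁m)
  have hgilint : ∀ i, ∫⁻ ω₁, (‖g₁ ω₁ i‖₊ : ℝ≥0∞) ∂Q₁ ≠ ⊤ := by
    intro i
    have := ((EuclideanSpace.proj (𝕜 := ℝ) i).integrable_comp hg₁int).2
    exact this.ne
  have hofReal_le : ∀ (τ : ℝ), |τ| ≤ 1 → ∀ (t : ℝ),
      ENNReal.ofReal (τ * t) ≤ (‖t‖₊ : ℝ≥0∞) := by
    intro τ hτ t
    rw [← enorm_eq_nnnorm, ← ofReal_norm_eq_enorm]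
    refine ENNReal.ofReal_le_ofReal ?_
    calc τ * t ≤ |τ * t| := le_abs_self _
      _ = |τ| * |t| := abs_mul _ _
      _ ≤ 1 * |t| := mul_le_mul_of_nonneg_right hτ (abs_nonneg _)
      _ = ‖t‖ := by rw [one_mul, Real.norm_eq_abs]
  have hνm_fin : ∀ (τ : ℝ), |τ| ≤ 1 → ∀ i {B : Set (Ω₁ × Ω₂)}, MeasurableSet B →
      νm τ i B ≠ ⊤ := by
    intro τ hτ i B hB
    rw [hνm_apply τ i hB]
    refine ne_top_of_le_ne_top ?_ (setLIntegral_le_lintegral _ _)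
    refine ne_top_of_le_ne_top ?_ (lintegral_mono fun p => hofReal_le τ hτ (g₁ p.1 i))
    have h1 : ∫⁻ p, (‖g₁ p.1 i‖₊ : ℝ≥0∞) ∂Q = ∫⁻ ω₁, (‖g₁ ω₁ i‖₊ : ℝ≥0∞) ∂Q₁ := by
      have := hlint_fst (fun ω₁ => (‖g₁ ω₁ i‖₊ : ℝ≥0∞)) ((hgi_meas i).nnnorm.coe_nnreal_ennreal)
        MeasurableSet.univ MeasurableSet.univ
      simpa [Set.univ_prod_univ, measure_univ] using this
    rw [h1]
    exact hgilint i
  -- rectangle formulas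
  have hμm_rect : ∀ (τ : ℝ) (i : Fin n) {A₁ : Set Ω₁}, MeasurableSet A₁ →
      ∀ {A₂ : Set Ω₂}, MeasurableSet A₂ →
      μm τ i (A₁ ×ˢ A₂) = (∫⁻ ω, c τ i ω * M₁ ω A₁ ∂P) * Q₂ A₂ := by
    intro τ i A₁ hA₁ A₂ hA₂
    have hFm : Measurable fun x : EuclideanSpace ℝ (Fin n) => ENNReal.ofReal (τ * x i) :=
      (((measurable_pi_apply i).comp (WithLp.measurable_ofLp 2 (Fin n → ℝ))).const_mul τ).ennreal_ofReal
    have hk := key _ hFm hA₁ hA₂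
    rw [hμm_apply τ i (hA₁.prod hA₂)]
    have h1 : ∀ ω, (M₁ ×ₖ M₂) ω (A₁ ×ˢ A₂) = M₁ ω A₁ * M₂ ω A₂ := by
      intro ω; rw [Kernel.prod_apply, Measure.prod_prod]
    simp_rw [h1, ← mul_assoc]
    exact hk
  have hνm_rect : ∀ (τ : ℝ) (i : Fin n) {A₁ : Set Ω₁}, MeasurableSet A₁ →
      ∀ {A₂ : Set Ω₂}, MeasurableSet A₂ →
      νm τ i (A₁ ×ˢ A₂) = (∫⁻ ω₁ in A₁, ENNReal.ofReal (τ * g₁ ω₁ i) ∂Q₁) * Q₂ A₂ := by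
    intro τ i A₁ hA₁ A₂ hA₂
    rw [hνm_apply τ i (hA₁.prod hA₂)]
    exact hlint_fst _ (((hgi_meas i).const_mul τ).ennreal_ofReal) hA₁ hA₂
  -- the conditional expectation identity for M₁, in ENNReal form
  have hdag : ∀ (i : Fin n) {A₁ : Set Ω₁}, MeasurableSet A₁ →
      (∫⁻ ω, c 1 i ω * M₁ ω A₁ ∂P) + ∫⁻ ω₁ in A₁, ENNReal.ofReal ((-1) * g₁ ω₁ i) ∂Q₁
      = (∫⁻ ω, c (-1) i ω * M₁ ω A₁ ∂P) + ∫⁻ ω₁ in A₁, ENNReal.ofReal (1 * g₁ ω₁ i) ∂Q₁ := by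
    intro i A₁ hA₁
    have hM₁m : Measurable fun ω => M₁ ω A₁ := Kernel.measurable_coe M₁ hA₁
    set t1 := ∫⁻ ω, c 1 i ω * M₁ ω A₁ ∂P with ht1def
    set t2 := ∫⁻ ω₁ in A₁, ENNReal.ofReal ((-1) * g₁ ω₁ i) ∂Q₁ with ht2def
    set t3 := ∫⁻ ω, c (-1) i ω * M₁ ω A₁ ∂P with ht3def
    set t4 := ∫⁻ ω₁ in A₁, ENNReal.ofReal (1 * g₁ ω₁ i) ∂Q₁ with ht4def
    have hbnd : ∀ (τ : ℝ), |τ| ≤ 1 → ∀ ω, c τ i ω * M₁ ω A₁ ≤ hh ω := by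
      intro τ hτ ω
      calc c τ i ω * M₁ ω A₁ ≤ c τ i ω * 1 := mul_le_mul_right prob_le_one _
        _ = c τ i ω := mul_one _
        _ ≤ hh ω := hcle τ hτ i ω
    have ht1 : t1 ≠ ⊤ := ne_top_of_le_ne_top hhfin (lintegral_mono (hbnd 1 (by norm_num)))
    have ht3 : t3 ≠ ⊤ := ne_top_of_le_ne_top hhfin (lintegral_mono (hbnd (-1) (by norm_num)))
    have ht2 : t2 ≠ ⊤ := by
      refine ne_top_of_le_ne_top (hgilint i) ?_
      refine le_trans (setLIntegral_le_lintegral _ _) (lintegral_mono fun ω₁ => ?_)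
      exact hofReal_le (-1) (by norm_num) _
    have ht4 : t4 ≠ ⊤ := by
      refine ne_top_of_le_ne_top (hgilint i) ?_
      refine le_trans (setLIntegral_le_lintegral _ _) (lintegral_mono fun ω₁ => ?_)
      exact hofReal_le 1 (by norm_num) _
    -- integrability of the vector integrand
    have hFint : Integrable (fun ω => (M₁ ω A₁).toReal • m ω) P :=
      hvecint _ hM₁m (fun ω => prob_le_one)
    -- project the defining identity of g₁ to coordinate i
    have hproj := congrArg (EuclideanSpace.proj (𝕜 := ℝ) i) (hg₁ A₁ hA₁)
    have hL : (EuclideanSpace.proj (𝕜 := ℝ) i) (∫ ω, (M₁ ω A₁).toReal • m ω ∂P)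
        = ∫ ω, (M₁ ω A₁).toReal * m ω i ∂P := by
      rw [← ContinuousLinearMap.integral_comp_comm _ hFint]
      rfl
    have hR : (EuclideanSpace.proj (𝕜 := ℝ) i) (∫ ω₁ in A₁, g₁ ω₁ ∂Q₁)
        = ∫ ω₁ in A₁, g₁ ω₁ i ∂Q₁ := by
      rw [← ContinuousLinearMap.integral_comp_comm _ hg₁int.restrict]
      rfl
    have hreal : ∫ ω, (M₁ ω A₁).toReal * m ω i ∂P = ∫ ω₁ in A₁, g₁ ω₁ i ∂Q₁ := by
      rw [← hL, ← hR]
      exact hproj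
    -- split left side
    have ha_int : Integrable (fun ω => (c 1 i ω * M₁ ω A₁).toReal) P :=
      integrable_toReal_of_lintegral_ne_top ((hcm 1 i).mul hM₁m).aemeasurable ht1
    have hb_int : Integrable (fun ω => (c (-1) i ω * M₁ ω A₁).toReal) P :=
      integrable_toReal_of_lintegral_ne_top ((hcm (-1) i).mul hM₁m).aemeasurable ht3
    have hsplit : ∫ ω, (M₁ ω A₁).toReal * m ω i ∂P
        = (∫ ω, (c 1 i ω * M₁ ω A₁).toReal ∂P) - ∫ ω, (c (-1) i ω * M₁ ω A₁).toReal ∂P := by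
      rw [← integral_sub ha_int hb_int]
      apply integral_congr_ae
      filter_upwards [hm_split] with ω hω
      rw [hω i, ENNReal.toReal_mul, ENNReal.toReal_mul]
      ring
    have hconv : ∀ (τ : ℝ), |τ| ≤ 1 →
        ∫ ω, (c τ i ω * M₁ ω A₁).toReal ∂P = (∫⁻ ω, c τ i ω * M₁ ω A₁ ∂P).toReal := by
      intro τ hτ
      refine integral_toReal ((hcm τ i).mul hM₁m).aemeasurable ?_
      filter_upwards [hhae] with ω hω
      exact lt_of_le_of_lt (hbnd τ hτ ω) hω
    -- split right side
    have hgiint : Integrable (fun ω₁ => g₁ ω₁ i) (Q₁.restrict A₁) :=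
      ((EuclideanSpace.proj (𝕜 := ℝ) i).integrable_comp hg₁int).restrict
    have hrs : ∫ ω₁ in A₁, g₁ ω₁ i ∂Q₁ = t4.toReal - t2.toReal := by
      rw [integral_eq_lintegral_pos_part_sub_lintegral_neg_part hgiint, ht4def, ht2def]
      simp only [one_mul, neg_one_mul]
    have hrealeq : t1.toReal - t3.toReal = t4.toReal - t2.toReal := by
      have e1 := hconv 1 (by norm_num)
      have e3 := hconv (-1) (by norm_num)
      rw [ht1def, ht3def]
      rw [← e1, ← e3, ← hsplit, hreal, hrs]
    have hfinal : (t1 + t2).toReal = (t3 + t4).toReal := by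
      rw [ENNReal.toReal_add ht1 ht2, ENNReal.toReal_add ht3 ht4]
      linarith
    exact (ENNReal.toReal_eq_toReal_iff' (ENNReal.add_ne_top.mpr ⟨ht1, ht2⟩)
      (ENNReal.add_ne_top.mpr ⟨ht3, ht4⟩)).mp hfinal
  -- the measure identity
  have claimC : ∀ i : Fin n, μm 1 i + νm (-1) i = μm (-1) i + νm 1 i := by
    intro i
    haveI : IsFiniteMeasure (μm 1 i) :=
      ⟨(hμm_fin 1 (by norm_num) i MeasurableSet.univ).lt_top⟩
    haveI : IsFiniteMeasure (μm (-1) i) :=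
      ⟨(hμm_fin (-1) (by norm_num) i MeasurableSet.univ).lt_top⟩
    haveI : IsFiniteMeasure (νm 1 i) :=
      ⟨(hνm_fin 1 (by norm_num) i MeasurableSet.univ).lt_top⟩
    haveI : IsFiniteMeasure (νm (-1) i) :=
      ⟨(hνm_fin (-1) (by norm_num) i MeasurableSet.univ).lt_top⟩
    have hrect : ∀ {A₁ : Set Ω₁}, MeasurableSet A₁ → ∀ {A₂ : Set Ω₂}, MeasurableSet A₂ →
        (μm 1 i + νm (-1) i) (A₁ ×ˢ A₂) = (μm (-1) i + νm 1 i) (A₁ ×ˢ A₂) := by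
      intro A₁ hA₁ A₂ hA₂
      rw [Measure.add_apply, Measure.add_apply, hμm_rect 1 i hA₁ hA₂,
        hμm_rect (-1) i hA₁ hA₂, hνm_rect 1 i hA₁ hA₂, hνm_rect (-1) i hA₁ hA₂,
        ← add_mul, ← add_mul, hdag i hA₁]
    refine MeasureTheory.ext_of_generate_finite _ generateFrom_prod.symm isPiSystem_prod ?_ ?_
    · rintro s ⟨A₁, hA₁, A₂, hA₂, rfl⟩
      exact hrect hA₁ hA₂
    · rw [← Set.univ_prod_univ]
      exact hrect MeasurableSet.univ MeasurableSet.univ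
  -- integrability of g₁ ∘ fst with respect to Q
  have hg₁fst_int : Integrable (fun p : Ω₁ × Ω₂ => g₁ p.1) Q := by
    refine ⟨(hg₁m.comp measurable_fst).aestronglyMeasurable, ?_⟩
    have h1 : ∫⁻ p, (‖g₁ p.1‖₊ : ℝ≥0∞) ∂Q = ∫⁻ ω₁, (‖g₁ ω₁‖₊ : ℝ≥0∞) ∂Q₁ := by
      have := hlint_fst (fun ω₁ => (‖g₁ ω₁‖₊ : ℝ≥0∞)) hg₁m.nnnorm.coe_nnreal_ennreal
        MeasurableSet.univ MeasurableSet.univ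
      simpa [Set.univ_prod_univ, measure_univ] using this
    show (∫⁻ p, (‖g₁ p.1‖₊ : ℝ≥0∞) ∂Q) < ⊤
    rw [h1]
    exact hg₁int.2
  -- conclusion via uniqueness of set integrals
  refine ae_eq_of_forall_setIntegral_eq_of_sigmaFinite
    (fun s _ _ => hg₁₂int.integrableOn) (fun s _ _ => hg₁fst_int.integrableOn) ?_
  intro B hB _
  rw [← hg₁₂ B hB]
  have hκBm : Measurable fun ω => (M₁ ×ₖ M₂) ω B := Kernel.measurable_coe _ hB
  have hFintB : Integrable (fun ω => ((M₁ ×ₖ M₂) ω B).toReal • m ω) P :=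
    hvecint _ hκBm (fun ω => prob_le_one)
  have hg₁₂proj_int : ∀ i : Fin n, Integrable (fun p : Ω₁ × Ω₂ => g₁ p.1 i) (Q.restrict B) :=
    fun i => ((EuclideanSpace.proj (𝕜 := ℝ) i).integrable_comp hg₁fst_int).restrict
  have hcomp : ∀ i : Fin n,
      (∫ ω, ((M₁ ×ₖ M₂) ω B).toReal • m ω ∂P) i = (∫ p in B, g₁ p.1 ∂Q) i := by
    intro i
    have hbndB : ∀ (τ : ℝ), |τ| ≤ 1 → ∀ ω, c τ i ω * (M₁ ×ₖ M₂) ω B ≤ hh ω := by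
      intro τ hτ ω
      calc c τ i ω * (M₁ ×ₖ M₂) ω B ≤ c τ i ω * 1 := mul_le_mul_right prob_le_one _
        _ = c τ i ω := mul_one _
        _ ≤ hh ω := hcle τ hτ i ω
    -- left-hand side
    have e1 : (EuclideanSpace.proj (𝕜 := ℝ) i) (∫ ω, ((M₁ ×ₖ M₂) ω B).toReal • m ω ∂P)
        = ∫ ω, ((M₁ ×ₖ M₂) ω B).toReal * m ω i ∂P := by
      rw [← ContinuousLinearMap.integral_comp_comm _ hFintB]
      rfl
    have ha_int : ∀ (τ : ℝ), |τ| ≤ 1 →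
        Integrable (fun ω => (c τ i ω * (M₁ ×ₖ M₂) ω B).toReal) P :=
      fun τ hτ => integrable_toReal_of_lintegral_ne_top ((hcm τ i).mul hκBm).aemeasurable
        (ne_top_of_le_ne_top hhfin (lintegral_mono (hbndB τ hτ)))
    have hsplitB : ∫ ω, ((M₁ ×ₖ M₂) ω B).toReal * m ω i ∂P
        = (∫ ω, (c 1 i ω * (M₁ ×ₖ M₂) ω B).toReal ∂P)
          - ∫ ω, (c (-1) i ω * (M₁ ×ₖ M₂) ω B).toReal ∂P := by
      rw [← integral_sub (ha_int 1 (by norm_num)) (ha_int (-1) (by norm_num))]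
      apply integral_congr_ae
      filter_upwards [hm_split] with ω hω
      rw [hω i, ENNReal.toReal_mul, ENNReal.toReal_mul]
      ring
    have hconvB : ∀ (τ : ℝ), |τ| ≤ 1 →
        ∫ ω, (c τ i ω * (M₁ ×ₖ M₂) ω B).toReal ∂P = (μm τ i B).toReal := by
      intro τ hτ
      rw [hμm_apply τ i hB]
      refine integral_toReal ((hcm τ i).mul hκBm).aemeasurable ?_
      filter_upwards [hhae] with ω hω
      exact lt_of_le_of_lt (hbndB τ hτ ω) hω
    have hLHS : (∫ ω, ((M₁ ×ₖ M₂) ω B).toReal • m ω ∂P) i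
        = (μm 1 i B).toReal - (μm (-1) i B).toReal := by
      have h := e1
      rw [hsplitB, hconvB 1 (by norm_num), hconvB (-1) (by norm_num)] at h
      exact h
    -- right-hand side
    have e2 : (EuclideanSpace.proj (𝕜 := ℝ) i) (∫ p in B, g₁ p.1 ∂Q)
        = ∫ p in B, g₁ p.1 i ∂Q := by
      rw [← ContinuousLinearMap.integral_comp_comm _ hg₁fst_int.restrict]
      rfl
    have hRHS : (∫ p in B, g₁ p.1 ∂Q) i = (νm 1 i B).toReal - (νm (-1) i B).toReal := by
      have h := e2
      rw [integral_eq_lintegral_pos_part_sub_lintegral_neg_part (hg₁₂proj_int i)] at h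
      rw [show ((∫ p in B, g₁ p.1 ∂Q) i : ℝ)
          = (EuclideanSpace.proj (𝕜 := ℝ) i) (∫ p in B, g₁ p.1 ∂Q) from rfl, h,
        hνm_apply 1 i hB, hνm_apply (-1) i hB]
      simp only [one_mul, neg_one_mul]
    -- combine using the measure identity
    have hCB : μm 1 i B + νm (-1) i B = μm (-1) i B + νm 1 i B := by
      have h := claimC i
      calc μm 1 i B + νm (-1) i B = (μm 1 i + νm (-1) i) B := (Measure.add_apply _ _ _).symm
        _ = (μm (-1) i + νm 1 i) B := by rw [h]
        _ = μm (-1) i B + νm 1 i B := Measure.add_apply _ _ _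
    have f1 := hμm_fin 1 (by norm_num) i hB
    have f2 := hνm_fin (-1) (by norm_num) i hB
    have f3 := hμm_fin (-1) (by norm_num) i hB
    have f4 := hνm_fin 1 (by norm_num) i hB
    have htr : (μm 1 i B).toReal + (νm (-1) i B).toReal
        = (μm (-1) i B).toReal + (νm 1 i B).toReal := by
      rw [← ENNReal.toReal_add f1 f2, ← ENNReal.toReal_add f3 f4, hCB]
    rw [hLHS, hRHS]
    linarith
  exact congrArg (WithLp.toLp 2) (funext hcomp)
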